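/- Define for integral weights μ, ν and x in the Weyl group the triangle function by the closed formula Δ(μ,ν;x)(τ−ρ) = c·∏_{α∈R^+, xα∈R^-} ⟨τ,α^∨⟩^{ᾱ(ν)} ⟨τ+ν,α^∨⟩^{ᾱ(μ)} ⟨τ+ν+μ,α^∨⟩^{ᾱ(ν+μ)} / (⟨τ,α^∨⟩^{ᾱ(ν+μ)} ⟨τ+ν,α^∨⟩^{ᾱ(ν)} ⟨τ+ν+μ,α^∨⟩^{ᾱ(μ)}), where ᾱ(λ)=1 if ⟨λ,α^∨⟩<0 and 0 otherwise. Then these rational functions satisfy the Decomposition identity: Δ(η+μ, ν; x)(τ) · Δ(η, μ; x)(τ+ν) = Δ(η, μ+ν; x)(τ) · Δ(μ, ν; x)(τ) for all integral weights η, μ, ν and all x ∈ W. -/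
import Mathlib


/-!
STATEMENT 9 (Decomposition identity): with Δ given by the closed product
formula, Δ(η+μ,ν;x)(τ)·Δ(η,μ;x)(τ+ν) = Δ(η,μ+ν;x)(τ)·Δ(μ,ν;x)(τ).
Coroot functionals `c` are indexed by the positive roots `ι`; `neg`
is the set {α ∈ R⁺ : xα ∈ R⁻} determined by x ∈ W; the integral weights
ν, μ, η have integer pairings `nν`, `nμ`, `nη`.  `Del c neg nν nμ ν μ τ'`
is the value Δ(μ,ν;x)(τ'-ρ) of the closed formula (with c = 1).
-/

open Finset

/-- ᾱ(λ) for the integer pairing value `n = ⟨λ,α^∨⟩`. -/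
def abar (n : ℤ) : ℕ := if n < 0 then 1 else 0

/-- The closed product formula: `Del c neg nν nμ ν μ τ = Δ(μ,ν;x)(τ-ρ)`,
where `neg = {α ∈ R⁺ : xα ∈ R⁻}`. -/
noncomputable def Del {k V ι : Type*} [Field k] [AddCommGroup V] [Module k V]
    (c : ι → V →ₗ[k] k) (neg : Finset ι) (nν nμ : ι → ℤ) (ν μ τ : V) : k :=
  ∏ α ∈ neg,
    ((c α τ) ^ abar (nν α) * (c α (τ + ν)) ^ abar (nμ α) *
        (c α (τ + ν + μ)) ^ abar (nν α + nμ α)) /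
      ((c α τ) ^ abar (nν α + nμ α) * (c α (τ + ν)) ^ abar (nν α) *
        (c α (τ + ν + μ)) ^ abar (nμ α))

lemma key_stmt9 {k : Type*} [Field k] (a b d e : k) (ha : a ≠ 0) (hb : b ≠ 0)
    (hd : d ≠ 0) (he : e ≠ 0) (p q r : ℤ) :
    (a ^ abar p * b ^ abar (r + q) * e ^ abar (p + (r + q))) /
        (a ^ abar (p + (r + q)) * b ^ abar p * e ^ abar (r + q)) *
      ((b ^ abar q * d ^ abar r * e ^ abar (q + r)) /
        (b ^ abar (q + r) * d ^ abar q * e ^ abar r)) =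
    (a ^ abar (q + p) * d ^ abar r * e ^ abar (q + p + r)) /
        (a ^ abar (q + p + r) * d ^ abar (q + p) * e ^ abar r) *
      ((a ^ abar p * b ^ abar q * d ^ abar (p + q)) /
        (a ^ abar (p + q) * b ^ abar p * d ^ abar q)) := by
  have e1 : r + q = q + r := add_comm r q
  have e2 : p + (q + r) = p + q + r := (add_assoc p q r).symm
  have e3 : q + p = p + q := add_comm q p
  rw [e1, e2, e3]
  rw [div_mul_div_comm, div_mul_div_comm, div_eq_div_iff
    (by simp [pow_ne_zero, ha, hb, hd, he, mul_ne_zero])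
    (by simp [pow_ne_zero, ha, hb, hd, he, mul_ne_zero])]
  ring

theorem stmt9 {k V ι : Type*} [Field k] [CharZero k] [AddCommGroup V] [Module k V]
    (c : ι → V →ₗ[k] k) (neg : Finset ι) (ρ ν μ η : V) (nν nμ nη : ι → ℤ)
    (hν : ∀ α, c α ν = (nν α : k)) (hμ : ∀ α, c α μ = (nμ α : k))
    (hη : ∀ α, c α η = (nη α : k))
    (τ : V)
    (h0 : ∀ α ∈ neg, c α (τ + ρ) ≠ 0)
    (h1 : ∀ α ∈ neg, c α (τ + ρ + ν) ≠ 0)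
    (h2 : ∀ α ∈ neg, c α (τ + ρ + ν + μ) ≠ 0)
    (h3 : ∀ α ∈ neg, c α (τ + ρ + ν + μ + η) ≠ 0) :
    Del c neg nν (fun α => nη α + nμ α) ν (η + μ) (τ + ρ) *
        Del c neg nμ nη μ η (τ + ν + ρ) =
      Del c neg (fun α => nμ α + nν α) nη (μ + ν) η (τ + ρ) *
        Del c neg nν nμ ν μ (τ + ρ) := by
  unfold Del
  rw [← Finset.prod_mul_distrib, ← Finset.prod_mul_distrib]
  refine Finset.prod_congr rfl fun α hα => ?_
  set a := c α (τ + ρ) with ha_def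
  -- rewrite all linear-map values in terms of a and the integer pairings
  have eb : c α (τ + ρ + ν) = a + (nν α : k) := by
    rw [map_add, hν]
  have ed : c α (τ + ρ + ν + μ) = a + (nν α : k) + (nμ α : k) := by
    rw [map_add, map_add, hν, hμ]
  have ee : c α (τ + ρ + ν + μ + η) = a + (nν α : k) + (nμ α : k) + (nη α : k) := by
    rw [map_add, map_add, map_add, hν, hμ, hη]
  have v1 : c α (τ + ρ + ν + (η + μ)) = a + (nν α : k) + (nμ α : k) + (nη α : k) := by
    rw [show τ + ρ + ν + (η + μ) = τ + ρ + ν + μ + η by abel, ee]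
  have v2 : c α (τ + ν + ρ) = a + (nν α : k) := by
    rw [show τ + ν + ρ = τ + ρ + ν by abel, eb]
  have v3 : c α (τ + ν + ρ + μ) = a + (nν α : k) + (nμ α : k) := by
    rw [show τ + ν + ρ + μ = τ + ρ + ν + μ by abel, ed]
  have v4 : c α (τ + ν + ρ + μ + η) = a + (nν α : k) + (nμ α : k) + (nη α : k) := by
    rw [show τ + ν + ρ + μ + η = τ + ρ + ν + μ + η by abel, ee]
  have v5 : c α (τ + ρ + (μ + ν)) = a + (nν α : k) + (nμ α : k) := by
    rw [show τ + ρ + (μ + ν) = τ + ρ + ν + μ by abel, ed]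
  have v6 : c α (τ + ρ + (μ + ν) + η) = a + (nν α : k) + (nμ α : k) + (nη α : k) := by
    rw [show τ + ρ + (μ + ν) + η = τ + ρ + ν + μ + η by abel, ee]
  have hb : (a + (nν α : k)) ≠ 0 := eb ▸ h1 α hα
  have hd : (a + (nν α : k) + (nμ α : k)) ≠ 0 := ed ▸ h2 α hα
  have he : (a + (nν α : k) + (nμ α : k) + (nη α : k)) ≠ 0 := ee ▸ h3 α hα
  rw [eb, ed, v1, v2, v3, v4, v5, v6]
  exact key_stmt9 a (a + (nν α : k)) (a + (nν α : k) + (nμ α : k))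
    (a + (nν α : k) + (nμ α : k) + (nη α : k)) (h0 α hα) hb hd he (nν α) (nμ α) (nη α)
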